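/- Let P' be a type and p' : P' → A → Prop, q' : P' → B → Prop injective relations with (p' ; g) = (q' ; h), and for d : P' let σ(d) = {Sum.inl a | p' d a} ∪ {Sum.inr b | q' d b}. Define u : P' → P → Prop by u d γ ↔ γ ⊆ σ(d). Then (u ; p) = p' and (u ; q) = q'. -/

import Mathlib

/-- A relation `R : A → Z → Prop` is injective if `R a z` and `R a' z` imply `a = a'`. -/
def IsInjRel {A Z : Type*} (R : A → Z → Prop) : Prop :=
  ∀ ⦃a a' : A⦄ ⦃z : Z⦄, R a z → R a' z → a = a'

/-- Image of a set under a relation. -/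
def RelImage {A Z : Type*} (R : A → Z → Prop) (α : Set A) : Set Z :=
  {z | ∃ a ∈ α, R a z}

/-- Composite of relations: `(R ; S) a c ↔ ∃ b, R a b ∧ S b c`. -/
def RelComp {A B C : Type*} (R : A → B → Prop) (S : B → C → Prop) : A → C → Prop :=
  fun a c => ∃ b, R a b ∧ S b c

/-- `σ ⊆ A ⊕ B` is a synchronisation when `g(σ_A) = h(σ_B)`. -/
def IsSync {A B Y : Type*} (g : A → Y → Prop) (h : B → Y → Prop)
    (σ : Set (A ⊕ B)) : Prop :=
  RelImage g {a | Sum.inl a ∈ σ} = RelImage h {b | Sum.inr b ∈ σ}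

/-- A path is a minimal non-empty synchronisation. -/
def IsPath {A B Y : Type*} (g : A → Y → Prop) (h : B → Y → Prop)
    (γ : Set (A ⊕ B)) : Prop :=
  IsSync g h γ ∧ γ.Nonempty ∧
    ∀ τ ⊆ γ, IsSync g h τ → τ.Nonempty → τ = γ

lemma exists_path_mem {A B Y : Type*} (g : A → Y → Prop) (h : B → Y → Prop)
    (hg : IsInjRel g) (hh : IsInjRel h)
    (σ : Set (A ⊕ B)) (hσ : IsSync g h σ) {x : A ⊕ B} (hx : x ∈ σ) :
    ∃ γ, IsPath g h γ ∧ γ ⊆ σ ∧ x ∈ γ := by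
  classical
  set Step : (A ⊕ B) → (A ⊕ B) → Prop := fun u v =>
    u ∈ σ ∧ v ∈ σ ∧ ((∃ a b y, u = Sum.inl a ∧ v = Sum.inr b ∧ g a y ∧ h b y) ∨
      (∃ a b y, u = Sum.inr b ∧ v = Sum.inl a ∧ g a y ∧ h b y)) with hStepdef
  have hsymm : Symmetric Step := by
    rintro u v ⟨hu, hv, hcase⟩
    refine ⟨hv, hu, ?_⟩
    rcases hcase with ⟨a,b,y,h1,h2,h3,h4⟩ | ⟨a,b,y,h1,h2,h3,h4⟩
    · exact Or.inr ⟨a,b,y,h2,h1,h3,h4⟩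
    · exact Or.inl ⟨a,b,y,h2,h1,h3,h4⟩
  set γ : Set (A ⊕ B) := {z | Relation.ReflTransGen Step x z} with hγdef
  have hsub : γ ⊆ σ := by
    intro z hz
    induction hz with
    | refl => exact hx
    | tail _ hstep _ => exact hstep.2.1
  have hmemγ : x ∈ γ := Relation.ReflTransGen.refl
  have hsync : IsSync g h γ := by
    ext y
    constructor
    · rintro ⟨a, ha, hay⟩
      have haσ : Sum.inl a ∈ σ := hsub ha
      have hy : y ∈ RelImage h {b | Sum.inr b ∈ σ} := by
        rw [← hσ]; exact ⟨a, haσ, hay⟩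
      obtain ⟨b, hbσ, hby⟩ := hy
      exact ⟨b, Relation.ReflTransGen.tail ha ⟨haσ, hbσ, Or.inl ⟨a,b,y,rfl,rfl,hay,hby⟩⟩, hby⟩
    · rintro ⟨b, hb, hby⟩
      have hbσ : Sum.inr b ∈ σ := hsub hb
      have hy : y ∈ RelImage g {a | Sum.inl a ∈ σ} := by
        rw [hσ]; exact ⟨b, hbσ, hby⟩
      obtain ⟨a, haσ, hay⟩ := hy
      exact ⟨a, Relation.ReflTransGen.tail hb ⟨hbσ, haσ, Or.inr ⟨a,b,y,rfl,rfl,hay,hby⟩⟩, hay⟩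
  refine ⟨γ, ⟨hsync, ⟨x, hmemγ⟩, ?_⟩, hsub, hmemγ⟩
  intro τ hτγ hτsync hτne
  have hclosed : ∀ u v, u ∈ τ → Step u v → v ∈ τ := by
    rintro u v hu ⟨_, _, hcase⟩
    rcases hcase with ⟨a,b,y,rfl,rfl,hay,hby⟩ | ⟨a,b,y,rfl,rfl,hay,hby⟩
    · have hy : y ∈ RelImage h {b | Sum.inr b ∈ τ} := by
        rw [← hτsync]; exact ⟨a, hu, hay⟩
      obtain ⟨b', hb', hb'y⟩ := hy
      rwa [hh hby hb'y]
    · have hy : y ∈ RelImage g {a | Sum.inl a ∈ τ} := by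
        rw [hτsync]; exact ⟨b, hu, hby⟩
      obtain ⟨a', ha', ha'y⟩ := hy
      rwa [hg hay ha'y]
  obtain ⟨z, hz⟩ := hτne
  have hzx : Relation.ReflTransGen Step z x :=
    letI : Std.Symm Step := ⟨fun _ _ h => hsymm h⟩
    Std.Symm.symm _ _ (hτγ hz)
  have key : ∀ w, Relation.ReflTransGen Step z w → w ∈ τ := by
    intro w hzw
    induction hzw with
    | refl => exact hz
    | tail _ hstep ih => exact hclosed _ _ ih hstep
  exact subset_antisymm hτγ (fun w hw => key w (hzx.trans hw))

/-- The mediating relation `u d γ ↔ γ ⊆ σ(d)` satisfies `(u ; p) = p'` and `(u ; q) = q'`. -/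
theorem mediating_commutes {A B Y : Type*} (g : A → Y → Prop) (h : B → Y → Prop)
    (hg : IsInjRel g) (hh : IsInjRel h)
    {P' : Type*} (p' : P' → A → Prop) (q' : P' → B → Prop)
    (hp' : IsInjRel p') (hq' : IsInjRel q')
    (hcomm : RelComp p' g = RelComp q' h) :
    RelComp
        (fun (d : P') (γ : {γ : Set (A ⊕ B) // IsPath g h γ}) =>
          γ.val ⊆ (Sum.inl '' {a | p' d a}) ∪ (Sum.inr '' {b | q' d b}))
        (fun (γ : {γ : Set (A ⊕ B) // IsPath g h γ}) (a : A) => Sum.inl a ∈ γ.val) = p' ∧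
      RelComp
        (fun (d : P') (γ : {γ : Set (A ⊕ B) // IsPath g h γ}) =>
          γ.val ⊆ (Sum.inl '' {a | p' d a}) ∪ (Sum.inr '' {b | q' d b}))
        (fun (γ : {γ : Set (A ⊕ B) // IsPath g h γ}) (b : B) => Sum.inr b ∈ γ.val) = q' := by
  have key : ∀ d : P',
      IsSync g h ((Sum.inl '' {a | p' d a}) ∪ (Sum.inr '' {b | q' d b})) := by
    intro d
    unfold IsSync RelImage
    ext y
    have hc : RelComp p' g d y = RelComp q' h d y := by rw [hcomm]
    simp only [RelComp, eq_iff_iff] at hc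
    simp only [Set.mem_setOf_eq, Set.mem_union, Set.mem_image]
    constructor
    · rintro ⟨a, ha, hay⟩
      have hpa : p' d a := by
        rcases ha with ⟨a', ha', heq⟩ | ⟨b, hb, heq⟩
        · cases heq; exact ha'
        · simp at heq
      obtain ⟨b, hqb, hby⟩ := hc.mp ⟨a, hpa, hay⟩
      exact ⟨b, Or.inr ⟨b, hqb, rfl⟩, hby⟩
    · rintro ⟨b, hb, hby⟩
      have hqb : q' d b := by
        rcases hb with ⟨a, ha, heq⟩ | ⟨b', hb', heq⟩
        · simp at heq
        · cases heq; exact hb'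
      obtain ⟨a, hpa, hay⟩ := hc.mpr ⟨b, hqb, hby⟩
      exact ⟨a, Or.inl ⟨a, hpa, rfl⟩, hay⟩
  constructor
  · funext d a
    apply propext
    constructor
    · rintro ⟨γ, hsub, ha⟩
      rcases hsub ha with ⟨a', ha', heq⟩ | ⟨b, hb, heq⟩
      · cases heq; exact ha'
      · simp at heq
    · intro hpa
      obtain ⟨γ, hγpath, hsub, hmem⟩ := exists_path_mem g h hg hh _ (key d)
        (x := Sum.inl a) (Or.inl ⟨a, hpa, rfl⟩)
      exact ⟨⟨γ, hγpath⟩, hsub, hmem⟩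
  · funext d b
    apply propext
    constructor
    · rintro ⟨γ, hsub, hb⟩
      rcases hsub hb with ⟨a, ha, heq⟩ | ⟨b', hb', heq⟩
      · simp at heq
      · cases heq; exact hb'
    · intro hqb
      obtain ⟨γ, hγpath, hsub, hmem⟩ := exists_path_mem g h hg hh _ (key d)
        (x := Sum.inr b) (Or.inr ⟨b, hqb, rfl⟩)
      exact ⟨⟨γ, hγpath⟩, hsub, hmem⟩
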